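/- Let H = ℓ²(ℕ, ℝ), let (αₙ) be positive reals with Σₙ αₙ² < ∞, let b_Dir be the indicator function of the irrationals and B_Dir(x) = Σₙ αₙ b_Dir(xₙ) eₙ. Then for every initial condition x ∈ H and every ε > 0, the set of continuous functions X : [0,ε] → H satisfying X(t) = x + ∫₀ᵗ B_Dir(X(s)) ds (Bochner integral in H) for all t ∈ [0,ε] is infinite; i.e., the equation dX/dt = B_Dir(X) in H has infinitely many solutions from every initial condition. -/

import Mathlib

open MeasureTheory intervalIntegral

/-- The Dirichlet function: indicator of the irrationals. -/
noncomputable def bDir : ℝ → ℝ := Set.indicator {x : ℝ | Irrational x} 1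

/-- Let `H = ℓ²(ℕ, ℝ)`, `(αₙ)` positive with `Σ αₙ² < ∞`, and `B_Dir x = Σₙ αₙ bDir(xₙ) eₙ`.
Then for every `x ∈ H` and `ε > 0`, there are infinitely many continuous solutions on `[0, ε]`
of `X(t) = x + ∫₀ᵗ B_Dir(X(s)) ds` (Bochner integral in `H`); solutions are identified with
their restrictions to `[0, ε]`. -/
theorem stmt5 (α : ℕ → ℝ) (hα : ∀ n, 0 < α n) (hsum : Summable fun n => (α n) ^ 2)
    (B : lp (fun _ : ℕ => ℝ) 2 → lp (fun _ : ℕ => ℝ) 2)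
    (hB : ∀ x : lp (fun _ : ℕ => ℝ) 2, ∀ n : ℕ, B x n = α n * bDir (x n))
    (x : lp (fun _ : ℕ => ℝ) 2) (ε : ℝ) (hε : 0 < ε) :
    {f : Set.Icc (0:ℝ) ε → lp (fun _ : ℕ => ℝ) 2 | ∃ Y : ℝ → lp (fun _ : ℕ => ℝ) 2,
      ContinuousOn Y (Set.Icc (0:ℝ) ε) ∧
      (∀ t ∈ Set.Icc (0:ℝ) ε, Y t = x + ∫ s in (0:ℝ)..t, B (Y s)) ∧
      f = (Set.Icc (0:ℝ) ε).restrict Y}.Infinite := by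
  classical
  have hα2 : Memℓp α 2 := by
    apply memℓp_gen
    apply hsum.congr
    intro n
    rw [show ((2:ENNReal)).toReal = ((2:ℕ):ℝ) by norm_num, Real.rpow_natCast]
    simp [sq_abs]
  set a : lp (fun _ : ℕ => ℝ) 2 := ⟨α, hα2⟩ with ha
  set c : lp (fun _ : ℕ => ℝ) 2 := lp.single 2 0 (α 0) with hc
  set a' : lp (fun _ : ℕ => ℝ) 2 := a - c with ha'
  have haco : ∀ n, a n = α n := fun n => rfl
  have hc0 : c 0 = α 0 := lp.single_apply_self _ _ _
  have hcn : ∀ n : ℕ, n ≠ 0 → c n = 0 := fun n h => lp.single_apply_ne 2 0 _ h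
  have hac : a = a' + c := by rw [ha']; abel
  set Y : ℝ → ℝ → lp (fun _ : ℕ => ℝ) 2 :=
    fun τ t => x + t • a' + min t τ • c with hYdef
  have hYcoord : ∀ τ t (n : ℕ), (Y τ t) n = x n + t * (α n - c n) + min t τ * c n := by
    intro τ t n
    simp only [hYdef, lp.coeFn_add, lp.coeFn_smul, Pi.add_apply, Pi.smul_apply, smul_eq_mul,
      ha', lp.coeFn_sub, Pi.sub_apply, haco]
  have hY0 : ∀ τ t, (Y τ t) 0 = x 0 + α 0 * min t τ := by
    intro τ t; rw [hYcoord, hc0]; ring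
  have hYn : ∀ τ t (n : ℕ), n ≠ 0 → (Y τ t) n = x n + α n * t := by
    intro τ t n hn; rw [hYcoord, hcn n hn]; ring
  have hbir : ∀ y : ℝ, Irrational y → bDir y = 1 := by
    intro y hy; simp [bDir, Set.indicator_of_mem, hy]
  have hbrat : ∀ y : ℝ, ¬ Irrational y → bDir y = 0 := by
    intro y hy; exact Set.indicator_of_notMem hy _
  -- value of B on the trajectory, before the stopping time
  have hBa : ∀ τ s, s < τ → (∀ n, Irrational (x n + α n * s)) → B (Y τ s) = a := by
    intro τ s hsτ hirr
    apply lp.ext; funext n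
    rw [hB]
    rcases eq_or_ne n 0 with rfl | hn
    · rw [hY0, min_eq_left hsτ.le, hbir _ (hirr 0), mul_one, haco]
    · rw [hYn _ _ _ hn, hbir _ (hirr n), mul_one, haco]
  -- value of B on the trajectory, after the stopping time
  have hBa' : ∀ τ s, τ ≤ s → ¬Irrational (x 0 + α 0 * τ) →
      (∀ n, Irrational (x n + α n * s)) → B (Y τ s) = a' := by
    intro τ s hτs hrat hirr
    apply lp.ext; funext n
    rw [hB]
    rcases eq_or_ne n 0 with rfl | hn
    · rw [hY0, min_eq_right hτs, hbrat _ hrat, mul_zero]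
      simp [ha', lp.coeFn_sub, hc0, haco]
    · rw [hYn _ _ _ hn, hbir _ (hirr n), mul_one]
      simp [ha', lp.coeFn_sub, hcn n hn, haco]
  -- the exceptional set is null
  have hnull : ∀ τ : ℝ, ∀ᵐ s : ℝ, s ≠ τ ∧ ∀ n, Irrational (x n + α n * s) := by
    intro τ
    have h1 : ∀ᵐ s : ℝ, s ≠ τ := by
      rw [ae_iff]
      have : {s : ℝ | ¬ s ≠ τ} = {τ} := by ext s; simp
      rw [this]
      exact measure_singleton τ
    have h2 : ∀ᵐ s : ℝ, ∀ n, Irrational (x n + α n * s) := by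
      rw [ae_all_iff]
      intro n
      have hcnt : Set.Countable {s : ℝ | ¬ Irrational (x n + α n * s)} := by
        apply Set.Countable.mono ?_ (Set.countable_range (fun q : ℚ => ((q:ℝ) - x n) / α n))
        intro s hs
        rw [Set.mem_setOf_eq, Irrational, not_not] at hs
        obtain ⟨q, hq⟩ := hs
        refine ⟨q, ?_⟩
        field_simp [(hα n).ne']
        linarith [hq]
      rw [ae_iff]
      exact hcnt.measure_zero _
    exact h1.and h2
  -- the integral equation holds for every admissible stopping time
  have hsol : ∀ τ : ℝ, 0 < τ → ¬Irrational (x 0 + α 0 * τ) →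
      ∀ t ∈ Set.Icc (0:ℝ) ε, Y τ t = x + ∫ s in (0:ℝ)..t, B (Y τ s) := by
    intro τ hτ0 hrat t ht
    obtain ⟨ht0, htε⟩ := ht
    set m := min t τ with hm
    have hm0 : 0 ≤ m := le_min ht0 hτ0.le
    have hmt : m ≤ t := min_le_left _ _
    have hae1 : ∀ᵐ s : ℝ, s ∈ Set.uIoc (0:ℝ) m → B (Y τ s) = a := by
      filter_upwards [hnull τ] with s hs hmem
      rw [Set.uIoc_of_le hm0] at hmem
      have hsτ : s < τ :=
        lt_of_le_of_ne (le_trans hmem.2 (min_le_right t τ)) hs.1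
      exact hBa τ s hsτ hs.2
    have hae2 : ∀ᵐ s : ℝ, s ∈ Set.uIoc m t → B (Y τ s) = a' := by
      filter_upwards [hnull τ] with s hs hmem
      rw [Set.uIoc_of_le hmt] at hmem
      have hτs : τ ≤ s := by
        rcases le_total τ t with h | h
        · have : m = τ := min_eq_right h
          linarith [hmem.1]
        · have : m = t := min_eq_left h
          linarith [hmem.1, hmem.2]
      exact hBa' τ s hτs hrat hs.2
    have key : ∀ (u v : ℝ), u ≤ v → ∀ (g : lp (fun _ : ℕ => ℝ) 2),
        (∀ᵐ s : ℝ, s ∈ Set.uIoc u v → B (Y τ s) = g) →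
        IntervalIntegrable (fun s => B (Y τ s)) volume u v ∧
        (∫ s in u..v, B (Y τ s)) = (v - u) • g := by
      intro u v huv g hg
      have hii : IntervalIntegrable (fun s => B (Y τ s)) volume u v := by
        rw [intervalIntegrable_iff, Set.uIoc_of_le huv]
        apply (integrableOn_const measure_Ioc_lt_top.ne : IntegrableOn (fun _ => g) (Set.Ioc u v) volume).congr
        rw [Set.uIoc_of_le huv] at hg
        exact ((ae_restrict_iff' measurableSet_Ioc).mpr
          (hg.mono fun s h hs => (h hs).symm))
      refine ⟨hii, ?_⟩
      rw [intervalIntegral.integral_congr_ae hg, intervalIntegral.integral_const]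
    obtain ⟨hi1, he1⟩ := key 0 m hm0 a hae1
    obtain ⟨hi2, he2⟩ := key m t hmt a' hae2
    have hsplit := intervalIntegral.integral_add_adjacent_intervals hi1 hi2
    rw [← hsplit, he1, he2]
    have hYexp : Y τ t = x + t • a' + m • c := rfl
    rw [hYexp, hac]
    have ht' : t • a' = m • a' + (t - m) • a' := by
      rw [← add_smul]; ring_nf
    rw [ht', smul_add, sub_zero]
    abel
  -- infinitely many admissible stopping times in (0, ε)
  have hx0 : x 0 < x 0 + α 0 * ε := by nlinarith [hα 0]
  obtain ⟨q₁, hq₁l, hq₁r⟩ := exists_rat_btwn hx0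
  obtain ⟨q₂, hq₂l, hq₂r⟩ := exists_rat_btwn hq₁r
  have hq12 : q₁ < q₂ := by exact_mod_cast hq₂l
  haveI : Infinite ↥(Set.Ioo q₁ q₂) := Set.Ioo.infinite hq12
  set τof : ℚ → ℝ := fun q => ((q:ℝ) - x 0) / α 0 with hτof
  have hτrat : ∀ q : ℚ, x 0 + α 0 * τof q = (q:ℝ) := by
    intro q; rw [hτof]; field_simp
    linarith [mul_div_cancel_left₀ ((q:ℝ) - x 0) (hα 0).ne']
  have hτmem : ∀ q : ℚ, q₁ < q → q < q₂ → τof q ∈ Set.Ioo (0:ℝ) ε := by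
    intro q h1 h2
    have hxq : x 0 < (q:ℝ) := lt_trans hq₁l (by exact_mod_cast h1)
    have hqε : (q:ℝ) < x 0 + α 0 * ε := lt_trans (by exact_mod_cast h2) hq₂r
    constructor
    · apply div_pos (by linarith) (hα 0)
    · rw [hτof]
      rw [div_lt_iff₀ (hα 0)]
      nlinarith
  apply Set.infinite_of_injective_forall_mem
    (f := fun q : ↥(Set.Ioo q₁ q₂) => (Set.Icc (0:ℝ) ε).restrict (Y (τof q.1)))
  · -- injectivity
    intro q q' h
    have hqm := hτmem q.1 q.2.1 q.2.2
    have hqm' := hτmem q'.1 q'.2.1 q'.2.2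
    have he : Y (τof q.1) ε = Y (τof q'.1) ε :=
      congrFun h ⟨ε, Set.mem_Icc.mpr ⟨hε.le, le_refl ε⟩⟩
    have h0 : (Y (τof q.1) ε) 0 = (Y (τof q'.1) ε) 0 := by rw [he]
    rw [hY0, hY0, min_eq_right hqm.2.le, min_eq_right hqm'.2.le] at h0
    have hτeq : τof q.1 = τof q'.1 := mul_left_cancel₀ (hα 0).ne' (by linarith)
    have : ((q.1 : ℚ) : ℝ) = ((q'.1 : ℚ) : ℝ) := by
      rw [← hτrat q.1, ← hτrat q'.1, hτeq]
    exact Subtype.ext (by exact_mod_cast this)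
  · -- membership
    intro q
    have hqm := hτmem q.1 q.2.1 q.2.2
    refine ⟨Y (τof q.1), (by
      apply Continuous.continuousOn
      exact ((continuous_const.add (continuous_id.smul continuous_const)).add
        ((continuous_id.min continuous_const).smul continuous_const))), ?_, rfl⟩
    apply hsol _ hqm.1
    rw [hτrat]
    exact Rat.not_irrational q.1
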